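/- Let h : [0,1] → [-1,1] be continuous with h(0) = -1 and h(1) = 1. Assume that there is no pair of rationals u < v in [0,1] such that h is identically 0 on the interval (u,v). Then for all rationals a < b in [0,1] with h(a) < 0 < h(b), there exist rationals a', b' with a < a' < b' < b, b' - a' < (b - a)/2, h(a') < 0 and h(b') > 0. -/
import Mathlib


open Set

/-- Auxiliary: if `h y` lies in an open set `s` and `0 ≤ l < y ≤ 1`, then there is a
rational `q ∈ (l, y)` with `h q ∈ s`. -/
lemma exists_rat_lt_of_mem {h : ℝ → ℝ} (hc : ContinuousOn h (Icc 0 1))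
    {s : Set ℝ} (hs : IsOpen s) {l y : ℝ} (hl0 : 0 ≤ l) (hly : l < y) (hy1 : y ≤ 1)
    (hy : h y ∈ s) : ∃ q : ℚ, l < (q:ℝ) ∧ (q:ℝ) < y ∧ h q ∈ s := by
  have hyI : y ∈ Icc (0:ℝ) 1 := ⟨hl0.trans hly.le, hy1⟩
  have hsub : Ioo l y ⊆ Icc (0:ℝ) 1 := fun z hz => ⟨hl0.trans hz.1.le, hz.2.le.trans hy1⟩
  have hne : (nhdsWithin y (Ioo l y)).NeBot := by
    rw [← mem_closure_iff_nhdsWithin_neBot, closure_Ioo hly.ne]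
    exact ⟨hly.le, le_refl y⟩
  have hev0 : h ⁻¹' s ∈ nhdsWithin y (Icc (0:ℝ) 1) :=
    (hc y hyI) (hs.mem_nhds hy)
  have hev : ∀ᶠ z in nhdsWithin y (Ioo l y), h z ∈ s :=
    nhdsWithin_mono y hsub hev0
  obtain ⟨x, hxs, hxI⟩ := (hev.and eventually_mem_nhdsWithin).exists
  have hx01 : x ∈ Ioo (0:ℝ) 1 := ⟨hl0.trans_lt hxI.1, hxI.2.trans_le hy1⟩
  have hca : ContinuousAt h x := hc.continuousAt (Icc_mem_nhds hx01.1 hx01.2)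
  have hev2 : ∀ᶠ z in nhds x, h z ∈ s ∧ z ∈ Ioo l y :=
    (hca.eventually_mem (hs.mem_nhds hxs)).and (isOpen_Ioo.eventually_mem hxI)
  rw [Metric.eventually_nhds_iff] at hev2
  obtain ⟨δ, hδ, hball⟩ := hev2
  obtain ⟨q, hq1, hq2⟩ := exists_rat_btwn (show x - δ < x by linarith)
  have hq : h q ∈ s ∧ (q:ℝ) ∈ Ioo l y := by
    apply hball
    rw [Real.dist_eq, abs_lt]
    constructor <;> linarith
  exact ⟨q, hq.2.1, hq.2.2, hq.1⟩

/-- If a continuous function `h : [0,1] → [-1,1]` with `h 0 = -1`, `h 1 = 1` vanishes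
identically on no rational subinterval of `[0,1]`, then every rational crossing interval
contains a rational crossing interval of less than half its length, strictly inside it. -/
theorem crossing_shrinks (h : ℝ → ℝ)
    (hc : ContinuousOn h (Icc 0 1)) (hm : MapsTo h (Icc 0 1) (Icc (-1) 1))
    (h0 : h 0 = -1) (h1 : h 1 = 1)
    (hnz : ¬ ∃ u v : ℚ, (0:ℝ) ≤ u ∧ (u:ℝ) < v ∧ (v:ℝ) ≤ 1 ∧
      ∀ t ∈ Ioo (u:ℝ) (v:ℝ), h t = 0) :
    ∀ a b : ℚ, (0:ℝ) ≤ a → (a:ℝ) < b → (b:ℝ) ≤ 1 → h a < 0 → 0 < h b →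
      ∃ a' b' : ℚ, (a:ℝ) < a' ∧ (a':ℝ) < b' ∧ (b':ℝ) < b ∧
        (b':ℝ) - a' < ((b:ℝ) - a) / 2 ∧ h a' < 0 ∧ 0 < h b' := by
  push_neg at hnz
  intro a b ha0 hab hb1 hhA hhB
  set S : Set ℝ := {x | x ∈ Icc (a:ℝ) (b:ℝ) ∧ h x < 0} with hSdef
  have haS : (a:ℝ) ∈ S := ⟨⟨le_refl _, hab.le⟩, hhA⟩
  have hSne : S.Nonempty := ⟨a, haS⟩
  have hSbdd : BddAbove S := ⟨b, fun x hx => hx.1.2⟩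
  have hSsub : S ⊆ Icc (0:ℝ) 1 := fun x hx => ⟨ha0.trans hx.1.1, hx.1.2.trans hb1⟩
  set c : ℝ := sSup S with hcdef
  have hac : (a:ℝ) ≤ c := le_csSup hSbdd haS
  have hcb : c ≤ (b:ℝ) := csSup_le hSne (fun x hx => hx.1.2)
  -- c > a
  have hcigt : (a:ℝ) < c := by
    have haI : (a:ℝ) ∈ Icc (0:ℝ) 1 := ⟨ha0, hab.le.trans hb1⟩
    have hsub : Ioo (a:ℝ) (b:ℝ) ⊆ Icc (0:ℝ) 1 :=
      fun z hz => ⟨ha0.trans hz.1.le, hz.2.le.trans hb1⟩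
    have hne : (nhdsWithin (a:ℝ) (Ioo (a:ℝ) (b:ℝ))).NeBot := by
      rw [← mem_closure_iff_nhdsWithin_neBot, closure_Ioo hab.ne]
      exact ⟨le_refl _, hab.le⟩
    have hev0 : h ⁻¹' (Iio 0) ∈ nhdsWithin (a:ℝ) (Icc (0:ℝ) 1) :=
      (hc _ haI) (isOpen_Iio.mem_nhds hhA)
    have hev : ∀ᶠ z in nhdsWithin (a:ℝ) (Ioo (a:ℝ) (b:ℝ)), h z < 0 :=
      nhdsWithin_mono _ hsub hev0
    obtain ⟨x, hxneg, hxI⟩ := (hev.and eventually_mem_nhdsWithin).exists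
    have : x ∈ S := ⟨⟨hxI.1.le, hxI.2.le⟩, hxneg⟩
    exact lt_of_lt_of_le hxI.1 (le_csSup hSbdd this)
  -- c < b
  have hclt : c < (b:ℝ) := by
    rcases lt_or_eq_of_le hcb with hlt | heq
    · exact hlt
    · exfalso
      have hbcl : (b:ℝ) ∈ closure S := heq ▸ csSup_mem_closure hSne hSbdd
      have hne : (nhdsWithin (b:ℝ) S).NeBot := mem_closure_iff_nhdsWithin_neBot.mp hbcl
      have hbI : (b:ℝ) ∈ Icc (0:ℝ) 1 := ⟨ha0.trans hab.le, hb1⟩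
      have hev0 : h ⁻¹' (Ioi 0) ∈ nhdsWithin (b:ℝ) (Icc (0:ℝ) 1) :=
        (hc _ hbI) (isOpen_Ioi.mem_nhds hhB)
      have hev : ∀ᶠ z in nhdsWithin (b:ℝ) S, 0 < h z :=
        nhdsWithin_mono _ hSsub hev0
      obtain ⟨x, hxpos, hxS⟩ := (hev.and eventually_mem_nhdsWithin).exists
      exact absurd hxS.2 (not_lt.mpr hxpos.le)
  -- choose ε
  set ε : ℝ := min (((b:ℝ) - a) / 8) (min (c - a) ((b:ℝ) - c)) with hεdef
  have hε : 0 < ε := by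
    apply lt_min (by linarith) (lt_min (by linarith) (by linarith))
  have hε1 : ε ≤ ((b:ℝ) - a) / 8 := min_le_left _ _
  have hε2 : ε ≤ c - a := (min_le_right _ _).trans (min_le_left _ _)
  have hε3 : ε ≤ (b:ℝ) - c := (min_le_right _ _).trans (min_le_right _ _)
  -- rationals q1 < q2 in (c, c + ε)
  obtain ⟨q1, hq1a, hq1b⟩ := exists_rat_btwn (show c < c + ε / 2 by linarith)
  obtain ⟨q2, hq2a, hq2b⟩ := exists_rat_btwn (show (q1:ℝ) < c + ε by linarith)
  have hq1pos : (0:ℝ) ≤ q1 := le_of_lt (lt_of_le_of_lt (ha0.trans hac) hq1a)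
  have hq2le1 : (q2:ℝ) ≤ 1 := by linarith
  -- apply hnz
  obtain ⟨t, htI, htne⟩ := hnz q1 q2 hq1pos (by exact_mod_cast hq2a) hq2le1
  have ht1 : (q1:ℝ) < t := htI.1
  have ht2 : t < (q2:ℝ) := htI.2
  -- h t ≥ 0 since t > c
  have htpos : 0 < h t := by
    rcases lt_trichotomy (h t) 0 with hlt | heq | hgt
    · exfalso
      have htS : t ∈ S := ⟨⟨hac.trans (hq1a.trans htI.1).le,
        (htI.2.trans hq2b).le.trans (by linarith)⟩, hlt⟩
      have : t ≤ c := le_csSup hSbdd htS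
      linarith [hq1a.trans htI.1]
    · exact absurd heq htne
    · exact hgt
  -- rational b' in (q1, t) with h b' > 0
  obtain ⟨b', hb'1, hb'2, hb'3⟩ := exists_rat_lt_of_mem hc isOpen_Ioi hq1pos ht1
    (by linarith : t ≤ 1) htpos
  -- point x in S with c - ε < x
  obtain ⟨x, hxS, hxgt⟩ := exists_lt_of_lt_csSup hSne (show c - ε < c by linarith)
  have hxc : x ≤ c := le_csSup hSbdd hxS
  -- rational a' in (c - ε, x) with h a' < 0
  obtain ⟨a', ha'1, ha'2, ha'3⟩ := exists_rat_lt_of_mem hc isOpen_Iio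
    (show (0:ℝ) ≤ c - ε by linarith) hxgt (by linarith : x ≤ 1) hxS.2
  refine ⟨a', b', ?_, ?_, ?_, ?_, ha'3, hb'3⟩
  · linarith
  · have : (a':ℝ) < c := lt_of_lt_of_le ha'2 hxc
    linarith
  · have : (b':ℝ) < c + ε := by linarith [ht2]
    linarith
  · linarith [ht2]
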